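/- Let χ = 2ρ̌. For every subset Π_{M'} ⊆ Π, the self-pairing of ξ_{M'} satisfies (ξ_{M'} : ξ_{M'}) = Σ_{Π_M ⊆ Π_{M'}} (−v²)^{|Π_{M'}|−|Π_M|} = Σ_{Π_M ⊆ Π_{M'}} (−v²)^{|Π_M|}. -/

import Mathlib

open scoped InnerProductSpace

noncomputable section

/-- The reflection `s_α` in the hyperplane orthogonal to `α`. -/
def sRefl {V : Type*} [NormedAddCommGroup V] [InnerProductSpace ℝ V] [FiniteDimensional ℝ V]
    (α : V) : V ≃ₗᵢ[ℝ] V :=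
  Submodule.reflection (ℝ ∙ α)ᗮ

/-- `r_n(w) = {α ∈ Δ : ⟨α, χ⟩ = n and wα ∈ Δ⁺}`. -/
def rW {V : Type*} [NormedAddCommGroup V] [InnerProductSpace ℝ V]
    (Δ pos : Finset V) (χ : V) (n : ℤ) (w : V ≃ₗᵢ[ℝ] V) : Set V :=
  {α : V | α ∈ Δ ∧ ⟪α, χ⟫_ℝ = (n : ℝ) ∧ w α ∈ pos}

/-- `τ(w₁,w₂) = #(r₂(w₁) ∆ r₂(w₂)) − #(r₀(w₁) ∆ r₀(w₂))`. -/
def tau {V : Type*} [NormedAddCommGroup V] [InnerProductSpace ℝ V]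
    (Δ pos : Finset V) (χ : V) (w₁ w₂ : V ≃ₗᵢ[ℝ] V) : ℤ :=
  ((symmDiff (rW Δ pos χ 2 w₁) (rW Δ pos χ 2 w₂)).ncard : ℤ)
    - ((symmDiff (rW Δ pos χ 0 w₁) (rW Δ pos χ 0 w₂)).ncard : ℤ)

/-- The symmetric `ℚ(v)`-bilinear form on the free `ℚ(v)`-module `K` with basis `W`,
determined on basis elements by `(w₁ : w₂) = (−v)^{τ(w₁,w₂)}`. -/
def Bform {V : Type*} [NormedAddCommGroup V] [InnerProductSpace ℝ V]
    (Δ pos : Finset V) (χ : V) (W : Subgroup (V ≃ₗᵢ[ℝ] V)) :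
    (W →₀ RatFunc ℚ) →ₗ[RatFunc ℚ] (W →₀ RatFunc ℚ) →ₗ[RatFunc ℚ] RatFunc ℚ :=
  Finsupp.linearCombination (RatFunc ℚ) fun w : W =>
    Finsupp.linearCombination (RatFunc ℚ) fun w' : W =>
      (-(RatFunc.X : RatFunc ℚ)) ^ (tau Δ pos χ (w : V ≃ₗᵢ[ℝ] V) (w' : V ≃ₗᵢ[ℝ] V))

/-- `ξ_{M'} = Σ_{Π_M ⊆ Π_{M'}} v^{|Π_{M'}|−|Π_M|} · w₀(M)` in `K`. -/
def xiElt {V : Type*} [NormedAddCommGroup V] [InnerProductSpace ℝ V]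
    (W : Subgroup (V ≃ₗᵢ[ℝ] V)) (w0M : Finset V → W) (M' : Finset V) :
    W →₀ RatFunc ℚ :=
  ∑ M ∈ M'.powerset,
    Finsupp.single (w0M M) ((RatFunc.X : RatFunc ℚ) ^ (M'.card - M.card))

/-! ### Auxiliary lemmas -/

lemma sRefl_apply' {V : Type*} [NormedAddCommGroup V] [InnerProductSpace ℝ V]
    [FiniteDimensional ℝ V] (α x : V) :
    sRefl α x = x - (2 * ⟪x, α⟫_ℝ / ⟪α, α⟫_ℝ) • α := by
  have h := Submodule.reflection_apply (K := (ℝ ∙ α)ᗮ) x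
  rw [sRefl, h, Submodule.starProjection_orthogonal_val, Submodule.starProjection_singleton,
    real_inner_comm α x, ← real_inner_self_eq_norm_sq]
  simp only [RCLike.ofReal_real_eq_id, id_eq]
  rw [div_eq_mul_inv, div_eq_mul_inv, mul_comm (2:ℝ)]
  module

lemma sRefl_sRefl {V : Type*} [NormedAddCommGroup V] [InnerProductSpace ℝ V]
    [FiniteDimensional ℝ V] (α x : V) : sRefl α (sRefl α x) = x :=
  Submodule.reflection_reflection _ x

lemma sRefl_self {V : Type*} [NormedAddCommGroup V] [InnerProductSpace ℝ V]
    [FiniteDimensional ℝ V] (α : V) (hα : α ≠ 0) : sRefl α α = -α := by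
  have h : ⟪α, α⟫_ℝ ≠ 0 := fun h0 => hα (inner_self_eq_zero.mp h0)
  rw [sRefl_apply', mul_div_assoc, div_self h, mul_one, two_smul]
  abel

section Alg
variable {ι : Type*} [DecidableEq ι] {R : Type*} [CommRing R]

lemma sum_pow_card (y : R) (s : Finset ι) :
    ∑ M ∈ s.powerset, y ^ M.card = (y + 1) ^ s.card := by
  have h := Finset.prod_add (fun _ : ι => y) (fun _ => 1) s
  simp only [Finset.prod_const, Finset.prod_const_one, mul_one, one_pow] at h
  rw [h]

lemma sum_pow_card_compl (y : R) (s : Finset ι) :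
    ∑ M ∈ s.powerset, y ^ (s.card - M.card) = ∑ M ∈ s.powerset, y ^ M.card := by
  refine Finset.sum_nbij' (fun M => s \ M) (fun M => s \ M) ?_ ?_ ?_ ?_ ?_
  · intro M hM; simp only [Finset.mem_powerset] at *; exact Finset.sdiff_subset
  · intro M hM; simp only [Finset.mem_powerset] at *; exact Finset.sdiff_subset
  · intro M hM; simp only [Finset.mem_powerset] at hM
    exact Finset.sdiff_sdiff_eq_self hM
  · intro M hM; simp only [Finset.mem_powerset] at hM
    exact Finset.sdiff_sdiff_eq_self hM
  · intro M hM; simp only [Finset.mem_powerset] at hM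
    rw [Finset.card_sdiff_of_subset hM]

lemma double_sum_eq (x : R) (s : Finset ι) :
    ∑ M₁ ∈ s.powerset, ∑ M₂ ∈ s.powerset,
      x ^ (s.card - M₁.card) * x ^ (s.card - M₂.card) * (-x) ^ (symmDiff M₁ M₂).card
    = (1 - x ^ 2) ^ s.card := by
  classical
  induction s using Finset.induction_on with
  | empty => simp
  | @insert a s ha ih =>
    have hinj : ∀ M ∈ s.powerset, ∀ N ∈ s.powerset, insert a M = insert a N → M = N := by
      intro M hM N hN h
      simp only [Finset.mem_powerset] at hM hN
      have haM : a ∉ M := fun h' => ha (hM h')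
      have haN : a ∉ N := fun h' => ha (hN h')
      rw [← Finset.erase_insert haM, ← Finset.erase_insert haN, h]
    have hdisj : Disjoint s.powerset (s.powerset.image (insert a)) := by
      rw [Finset.disjoint_left]
      intro M hM hM'
      simp only [Finset.mem_image, Finset.mem_powerset] at hM hM'
      obtain ⟨N, hN, rfl⟩ := hM'
      exact ha (hM (Finset.mem_insert_self a N))
    have hcard : (insert a s).card = s.card + 1 := Finset.card_insert_of_notMem ha
    have hsub : ∀ M ∈ s.powerset, (insert a s).card - M.card = (s.card - M.card) + 1 := by
      intro M hM
      simp only [Finset.mem_powerset] at hM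
      have := Finset.card_le_card hM
      omega
    have hsub2 : ∀ M ∈ s.powerset, (insert a s).card - (insert a M).card = s.card - M.card := by
      intro M hM
      simp only [Finset.mem_powerset] at hM
      have haM : a ∉ M := fun h' => ha (hM h')
      rw [hcard, Finset.card_insert_of_notMem haM]
      omega
    have hsd1 : ∀ M₁ ∈ s.powerset, ∀ M₂ ∈ s.powerset,
        (symmDiff (insert a M₁) M₂).card = (symmDiff M₁ M₂).card + 1 := by
      intro M₁ h₁ M₂ h₂
      simp only [Finset.mem_powerset] at h₁ h₂
      have h1 : a ∉ M₁ := fun h' => ha (h₁ h')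
      have h2 : a ∉ M₂ := fun h' => ha (h₂ h')
      have : symmDiff (insert a M₁) M₂ = insert a (symmDiff M₁ M₂) := by
        ext b
        simp only [Finset.mem_symmDiff, Finset.mem_insert]
        by_cases hb : b = a
        · subst hb; tauto
        · tauto
      rw [this, Finset.card_insert_of_notMem]
      simp only [Finset.mem_symmDiff]
      tauto
    have hsd1' : ∀ M₁ ∈ s.powerset, ∀ M₂ ∈ s.powerset,
        (symmDiff M₁ (insert a M₂)).card = (symmDiff M₁ M₂).card + 1 := by
      intro M₁ h₁ M₂ h₂
      rw [symmDiff_comm, hsd1 M₂ h₂ M₁ h₁, symmDiff_comm]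
    have hsd2 : ∀ M₁ ∈ s.powerset, ∀ M₂ ∈ s.powerset,
        (symmDiff (insert a M₁) (insert a M₂)).card = (symmDiff M₁ M₂).card := by
      intro M₁ h₁ M₂ h₂
      simp only [Finset.mem_powerset] at h₁ h₂
      have h1 : a ∉ M₁ := fun h' => ha (h₁ h')
      have h2 : a ∉ M₂ := fun h' => ha (h₂ h')
      congr 1
      ext b
      simp only [Finset.mem_symmDiff, Finset.mem_insert]
      by_cases hb : b = a
      · subst hb; tauto
      · tauto
    rw [Finset.powerset_insert, Finset.sum_union hdisj]
    rw [Finset.sum_image hinj]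
    have step : ∀ M₁ ∈ s.powerset,
        (∑ M₂ ∈ s.powerset ∪ s.powerset.image (insert a),
          x ^ ((insert a s).card - M₁.card) * x ^ ((insert a s).card - M₂.card)
            * (-x) ^ (symmDiff M₁ M₂).card)
        = (x^2 + (-(x^2))) * ∑ M₂ ∈ s.powerset,
            x ^ (s.card - M₁.card) * x ^ (s.card - M₂.card) * (-x) ^ (symmDiff M₁ M₂).card := by
      intro M₁ h₁
      rw [Finset.sum_union hdisj, Finset.sum_image hinj, Finset.mul_sum, ← Finset.sum_add_distrib]
      refine Finset.sum_congr rfl ?_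
      intro M₂ h₂
      rw [hsub M₁ h₁, hsub M₂ h₂, hsub2 M₂ h₂, hsd1' M₁ h₁ M₂ h₂]
      ring
    have step2 : ∀ M₁ ∈ s.powerset,
        (∑ M₂ ∈ s.powerset ∪ s.powerset.image (insert a),
          x ^ ((insert a s).card - (insert a M₁).card) * x ^ ((insert a s).card - M₂.card)
            * (-x) ^ (symmDiff (insert a M₁) M₂).card)
        = ((-(x^2)) + 1) * ∑ M₂ ∈ s.powerset,
            x ^ (s.card - M₁.card) * x ^ (s.card - M₂.card) * (-x) ^ (symmDiff M₁ M₂).card := by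
      intro M₁ h₁
      rw [Finset.sum_union hdisj, Finset.sum_image hinj, Finset.mul_sum, ← Finset.sum_add_distrib]
      refine Finset.sum_congr rfl ?_
      intro M₂ h₂
      rw [hsub M₂ h₂, hsub2 M₁ h₁, hsub2 M₂ h₂, hsd1 M₁ h₁ M₂ h₂, hsd2 M₁ h₁ M₂ h₂]
      ring
    rw [Finset.sum_congr rfl step, Finset.sum_congr rfl step2,
      ← Finset.mul_sum, ← Finset.mul_sum, ← add_mul, ih, hcard, pow_succ]
    ring

end Alg

theorem stmt10
    {V : Type*} [NormedAddCommGroup V] [InnerProductSpace ℝ V] [FiniteDimensional ℝ V]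
    (Δ pos Pi : Finset V) (χ : V)
    -- root system axioms: finite (a `Finset`), spanning, reduced, crystallographic,
    -- stable under negation and under the reflections `s_α`
    (hspan : Submodule.span ℝ (Δ : Set V) = ⊤)
    (hzero : (0 : V) ∉ Δ)
    (hsym : ∀ α ∈ Δ, -α ∈ Δ)
    (hred : ∀ α ∈ Δ, ∀ t : ℝ, t • α ∈ Δ → t = 1 ∨ t = -1)
    (hcrys : ∀ α ∈ Δ, ∀ β ∈ Δ, ∃ n : ℤ, 2 * ⟪β, α⟫_ℝ / ⟪α, α⟫_ℝ = (n : ℝ))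
    (hrefl : ∀ α ∈ Δ, ∀ β ∈ Δ, sRefl α β ∈ Δ)
    -- positive roots and simple roots
    (hposΔ : pos ⊆ Δ)
    (hpart : ∀ α ∈ Δ, (α ∈ pos ↔ -α ∉ pos))
    (hPipos : Pi ⊆ pos)
    (hindep : LinearIndependent ℝ (fun β : (Pi : Set V) => (β : V)))
    (hcomb : ∀ α ∈ pos, ∃ c : V → ℕ, α = ∑ β ∈ Pi, (c β : ℝ) • β)
    -- the Weyl group, generated by the reflections in the roots
    (W : Subgroup (V ≃ₗᵢ[ℝ] V))
    (hW : W = Subgroup.closure {e : V ≃ₗᵢ[ℝ] V | ∃ α ∈ Δ, e = sRefl α})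
    -- `χ = 2ρ̌` is the sum of the positive coroots `β̌ = 2β/(β,β)`
    (hchi : χ = ∑ β ∈ pos, ((2 : ℝ) / ⟪β, β⟫_ℝ) • β)
    -- for each `Π_M ⊆ Π`, `w₀(M) ∈ W` is the element of the subgroup `W_M` generated
    -- by the reflections in `Π_M` mapping every positive root in `Δ ∩ span Π_M` to a
    -- negative root
    (w0M : Finset V → W)
    (hw0MW : ∀ M, M ⊆ Pi →
      (w0M M : V ≃ₗᵢ[ℝ] V) ∈ Subgroup.closure {e : V ≃ₗᵢ[ℝ] V | ∃ α ∈ M, e = sRefl α})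
    (hw0Mneg : ∀ M, M ⊆ Pi → ∀ α ∈ Δ,
      α ∈ Submodule.span ℝ (M : Set V) → α ∈ pos → -((w0M M : V ≃ₗᵢ[ℝ] V) α) ∈ pos)
    :
    ∀ M', M' ⊆ Pi →
      Bform Δ pos χ W (xiElt W w0M M') (xiElt W w0M M')
          = ∑ M ∈ M'.powerset, (-(RatFunc.X ^ 2) : RatFunc ℚ) ^ (M'.card - M.card) ∧
      Bform Δ pos χ W (xiElt W w0M M') (xiElt W w0M M')
          = ∑ M ∈ M'.powerset, (-(RatFunc.X ^ 2) : RatFunc ℚ) ^ M.card := by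
  classical
  have hPiΔ : Pi ⊆ Δ := fun α h => hposΔ (hPipos h)
  have hne0 : ∀ α ∈ Δ, α ≠ (0 : V) := fun α h h0 => hzero (h0 ▸ h)
  have hii : ∀ α ∈ Δ, ⟪α, α⟫_ℝ ≠ 0 := fun α h h0 => hne0 α h (inner_self_eq_zero.mp h0)
  -- coefficient extraction from linear independence
  have hli : ∀ f : V → ℝ, (∑ β ∈ Pi, f β • β) = 0 → ∀ β ∈ Pi, f β = 0 := by
    intro f hf β hβ
    have h := linearIndependent_iff'.mp hindep Finset.univ (fun i => f i) ?_ ⟨β, hβ⟩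
      (Finset.mem_univ _)
    · exact h
    · rw [← hf, ← Finset.sum_coe_sort Pi (fun β => f β • β)]; rfl
  have hL1 : ∀ α ∈ Pi, ∀ β ∈ pos, β ≠ α → sRefl α β ∈ pos := by
    intro α hα β hβ hne'
    have hαΔ := hPiΔ hα
    have hβΔ := hposΔ hβ
    have hsΔ : sRefl α β ∈ Δ := hrefl α hαΔ β hβΔ
    by_contra hneg
    have hγ : -(sRefl α β) ∈ pos := by
      by_contra h
      exact hneg ((hpart _ hsΔ).mpr h)
    obtain ⟨b, hb⟩ := hcomb β hβ
    obtain ⟨g, hg⟩ := hcomb _ hγ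
    have hs : sRefl α β = β - (2 * ⟪β, α⟫_ℝ / ⟪α, α⟫_ℝ) • α := sRefl_apply' α β
    set c : ℝ := 2 * ⟪β, α⟫_ℝ / ⟪α, α⟫_ℝ with hc
    have hkey : ∀ δ ∈ Pi, (b δ : ℝ) + (g δ : ℝ) - (if δ = α then c else 0) = 0 := by
      apply hli
      have e1 : ∑ δ ∈ Pi, ((b δ : ℝ) + (g δ : ℝ) - (if δ = α then c else 0)) • δ
          = ((∑ δ ∈ Pi, (b δ : ℝ) • δ) + (∑ δ ∈ Pi, (g δ : ℝ) • δ))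
            - ∑ δ ∈ Pi, (if δ = α then c else 0) • δ := by
        rw [← Finset.sum_add_distrib, ← Finset.sum_sub_distrib]
        refine Finset.sum_congr rfl fun δ _ => ?_
        rw [sub_smul, add_smul]
      have e2 : ∑ δ ∈ Pi, (if δ = α then c else 0) • δ = c • α := by
        simp only [ite_smul, zero_smul]
        rw [Finset.sum_ite_eq' Pi α (fun δ => c • δ), if_pos hα]
      rw [e1, e2, ← hb, ← hg, hs]
      abel
    have hb0 : ∀ δ ∈ Pi, δ ≠ α → (b δ : ℝ) = 0 := by
      intro δ hδ hδα
      have hk := hkey δ hδ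
      rw [if_neg hδα] at hk
      have h1 : (0:ℝ) ≤ (b δ : ℝ) := Nat.cast_nonneg _
      have h2 : (0:ℝ) ≤ (g δ : ℝ) := Nat.cast_nonneg _
      linarith
    have hβα : β = (b α : ℝ) • α := by
      rw [hb, Finset.sum_eq_single α]
      · intro δ hδ hδα; rw [hb0 δ hδ hδα, zero_smul]
      · intro h; exact absurd hα h
    rcases hred α hαΔ (b α : ℝ) (by rw [← hβα]; exact hβΔ) with h1 | h1
    · exact hne' (by rw [hβα, h1, one_smul])
    · have hnn : (0:ℝ) ≤ (b α : ℝ) := Nat.cast_nonneg _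
      rw [h1] at hnn; linarith
  -- pairing of χ with a simple root is 2
  have hχ2 : ∀ α ∈ Pi, ⟪χ, α⟫_ℝ = 2 := by
    intro α hα
    have hαΔ := hPiΔ hα
    have hα0 := hne0 α hαΔ
    have hαα := hii α hαΔ
    have hαpos := hPipos hα
    have h2 : sRefl α χ = χ - (4 / ⟪α, α⟫_ℝ) • α := by
      have hmap : sRefl α χ = ∑ β ∈ pos, ((2:ℝ) / ⟪β, β⟫_ℝ) • sRefl α β := by
        rw [hchi, map_sum]
        refine Finset.sum_congr rfl fun β _ => ?_
        rw [map_smul]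
      have hre : ∑ β ∈ pos.erase α, ((2:ℝ)/⟪β, β⟫_ℝ) • sRefl α β
          = ∑ β ∈ pos.erase α, ((2:ℝ)/⟪β, β⟫_ℝ) • β := by
        have hmem : ∀ β ∈ pos.erase α, sRefl α β ∈ pos.erase α := by
          intro β hβ
          simp only [Finset.mem_erase] at hβ ⊢
          refine ⟨?_, hL1 α hα β hβ.2 hβ.1⟩
          intro heq
          have hβeq : β = sRefl α ((sRefl α) β) := (sRefl_sRefl α β).symm
          rw [heq, sRefl_self α hα0] at hβeq
          have hnot : -α ∉ pos := (hpart α hαΔ).mp hαpos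
          rw [hβeq] at hβ
          exact hnot hβ.2
        refine Finset.sum_nbij' (fun β => sRefl α β) (fun β => sRefl α β)
          hmem hmem (fun β _ => sRefl_sRefl α β) (fun β _ => sRefl_sRefl α β) ?_
        intro β hβ
        rw [LinearIsometryEquiv.inner_map_map (sRefl α) β β]
      rw [hmap, ← Finset.sum_erase_add pos _ hαpos, hre, sRefl_self α hα0]
      rw [hchi, ← Finset.sum_erase_add pos _ hαpos]
      rw [div_eq_mul_inv, div_eq_mul_inv]
      module
    have h1 : sRefl α χ = χ - (2 * ⟪χ, α⟫_ℝ / ⟪α, α⟫_ℝ) • α := sRefl_apply' α χ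
    have heq : (2 * ⟪χ, α⟫_ℝ / ⟪α, α⟫_ℝ) • α = (4 / ⟪α, α⟫_ℝ) • α := by
      have h3 := h1.symm.trans h2
      rwa [sub_right_inj] at h3
    have hsc : 2 * ⟪χ, α⟫_ℝ / ⟪α, α⟫_ℝ = 4 / ⟪α, α⟫_ℝ := by
      have h0 : (2 * ⟪χ, α⟫_ℝ / ⟪α, α⟫_ℝ - 4 / ⟪α, α⟫_ℝ) • α = 0 := by
        rw [sub_smul, heq, sub_self]
      rcases smul_eq_zero.mp h0 with h | h
      · linarith [sub_eq_zero.mp h]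
      · exact absurd h hα0
    field_simp at hsc
    linarith
  -- inner product with χ in terms of simple-root coefficients
  have hval : ∀ α ∈ pos, ∀ c : V → ℕ, α = ∑ β ∈ Pi, (c β : ℝ) • β →
      ⟪α, χ⟫_ℝ = 2 * ∑ β ∈ Pi, (c β : ℝ) := by
    intro α hα c hc
    rw [hc, sum_inner, Finset.mul_sum]
    refine Finset.sum_congr rfl fun β hβ => ?_
    rw [real_inner_smul_left, real_inner_comm, hχ2 β hβ]
    ring
  have hmemneg : ∀ α ∈ Δ, α ∉ pos → -α ∈ pos := by
    intro α hαΔ hp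
    by_contra h
    exact hp ((hpart α hαΔ).mpr h)
  have hchine : ∀ α ∈ Δ, ⟪α, χ⟫_ℝ ≠ 0 := by
    have key : ∀ α ∈ pos, ⟪α, χ⟫_ℝ ≠ 0 := by
      intro α hp h0
      obtain ⟨c, hc⟩ := hcomb α hp
      rw [hval α hp c hc] at h0
      have hsum : ∑ β ∈ Pi, (c β:ℝ) = 0 := by linarith
      have hz : ∀ β ∈ Pi, (c β : ℝ) = 0 :=
        (Finset.sum_eq_zero_iff_of_nonneg (fun b _ => Nat.cast_nonneg _)).mp hsum
      have hα0 : α = 0 := by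
        rw [hc]; exact Finset.sum_eq_zero fun β hβ => by rw [hz β hβ, zero_smul]
      exact hne0 α (hposΔ hp) hα0
    intro α hαΔ h0
    by_cases hp : α ∈ pos
    · exact key α hp h0
    · refine key (-α) (hmemneg α hαΔ hp) ?_
      rw [inner_neg_left, h0, neg_zero]
  have heq2 : ∀ α ∈ Δ, (⟪α, χ⟫_ℝ = 2 ↔ α ∈ Pi) := by
    intro α hαΔ
    constructor
    · intro h2
      by_cases hp : α ∈ pos
      · obtain ⟨c, hc⟩ := hcomb α hp
        rw [hval α hp c hc] at h2
        have hSR : ∑ β ∈ Pi, (c β:ℝ) = 1 := by linarith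
        have hS : ∑ β ∈ Pi, c β = 1 := by
          have hcast : ((∑ β ∈ Pi, c β : ℕ) : ℝ) = 1 := by push_cast; exact hSR
          exact_mod_cast hcast
        obtain ⟨β₀, hβ₀, hcne⟩ : ∃ β₀ ∈ Pi, c β₀ ≠ 0 := by
          by_contra h; push_neg at h
          rw [Finset.sum_eq_zero h] at hS
          exact one_ne_zero hS.symm
        have hsplit : ∑ β ∈ Pi.erase β₀, c β + c β₀ = 1 := by
          rw [Finset.sum_erase_add _ _ hβ₀, hS]
        have hrest : ∑ β ∈ Pi.erase β₀, c β = 0 ∧ c β₀ = 1 := by omega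
        have hαβ₀ : α = β₀ := by
          rw [hc, Finset.sum_eq_single β₀]
          · rw [hrest.2, Nat.cast_one, one_smul]
          · intro δ hδ hδβ
            have : c δ = 0 := by
              have := (Finset.sum_eq_zero_iff.mp hrest.1) δ (Finset.mem_erase.mpr ⟨hδβ, hδ⟩)
              exact this
            rw [this, Nat.cast_zero, zero_smul]
          · intro h; exact absurd hβ₀ h
        rw [hαβ₀]; exact hβ₀
      · exfalso
        obtain ⟨c, hc⟩ := hcomb (-α) (hmemneg α hαΔ hp)
        have hv := hval (-α) (hmemneg α hαΔ hp) c hc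
        rw [inner_neg_left, h2] at hv
        have hnn : (0:ℝ) ≤ ∑ β ∈ Pi, (c β:ℝ) :=
          Finset.sum_nonneg fun b _ => Nat.cast_nonneg _
        linarith
    · intro hα
      rw [real_inner_comm]
      exact hχ2 α hα
  -- elements of reflection subgroups preserve Δ
  have hWΔ : ∀ g, g ∈ Subgroup.closure {e : V ≃ₗᵢ[ℝ] V | ∃ α ∈ Δ, e = sRefl α} →
      ∀ β : V, (β ∈ Δ ↔ g β ∈ Δ) := by
    intro g hg
    refine Subgroup.closure_induction
      (p := fun g _ => ∀ β : V, (β ∈ Δ ↔ g β ∈ Δ)) ?_ ?_ ?_ ?_ hg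
    · rintro e ⟨α, hαΔ, rfl⟩ β
      constructor
      · exact fun h => hrefl α hαΔ β h
      · intro h
        have h2 := hrefl α hαΔ _ h
        rwa [sRefl_sRefl] at h2
    · intro β
      exact Iff.rfl
    · intro x y hx hy hx' hy' β
      have : (x * y) β = x (y β) := rfl
      rw [this, ← hx' (y β), ← hy' β]
    · intro x hx hx' β
      have h1 := hx' (x⁻¹ β)
      have hxx : x (x⁻¹ β) = β := by simp
      rw [hxx] at h1
      exact h1.symm
  have hw0MΔ : ∀ M, M ⊆ Pi → ∀ β ∈ Δ, (w0M M : V ≃ₗᵢ[ℝ] V) β ∈ Δ := by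
    intro M hMPi β hβ
    have hmono : Subgroup.closure {e : V ≃ₗᵢ[ℝ] V | ∃ α ∈ M, e = sRefl α}
        ≤ Subgroup.closure {e : V ≃ₗᵢ[ℝ] V | ∃ α ∈ Δ, e = sRefl α} := by
      apply Subgroup.closure_mono
      rintro e ⟨α, hα, rfl⟩
      exact ⟨α, hPiΔ (hMPi hα), rfl⟩
    exact (hWΔ _ (hmono (hw0MW M hMPi)) β).mp hβ
  have hspanDiff : ∀ M, M ⊆ Pi → ∀ x : V,
      (w0M M : V ≃ₗᵢ[ℝ] V) x - x ∈ Submodule.span ℝ (M : Set V) := by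
    intro M hMPi
    refine Subgroup.closure_induction
      (p := fun g _ => ∀ x : V, g x - x ∈ Submodule.span ℝ (M : Set V)) ?_ ?_ ?_ ?_ (hw0MW M hMPi)
    · rintro e ⟨α, hα, rfl⟩ x
      rw [sRefl_apply', sub_sub_cancel_left]
      exact neg_mem (Submodule.smul_mem _ _ (Submodule.subset_span hα))
    · intro x
      simp
    · intro x y hx hy hx' hy' z
      have h3 : (x * y) z - z = (x (y z) - y z) + (y z - z) := by
        have : (x * y) z = x (y z) := rfl
        rw [this]; abel
      rw [h3]
      exact add_mem (hx' (y z)) (hy' z)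
    · intro x hx hx' z
      have h1 := hx' (x⁻¹ z)
      have hxx : x (x⁻¹ z) = z := by simp
      rw [hxx] at h1
      have h3 : x⁻¹ z - z = -(z - x⁻¹ z) := by abel
      rw [h3]
      exact neg_mem h1
  -- action of `w₀(M)` on simple roots
  have hposW : ∀ M, M ⊆ Pi → ∀ α ∈ Pi, α ∉ M → (w0M M : V ≃ₗᵢ[ℝ] V) α ∈ pos := by
    intro M hMPi α hαPi hαM
    set w := (w0M M : V ≃ₗᵢ[ℝ] V) with hw'
    have hwΔ : w α ∈ Δ := hw0MΔ M hMPi α (hPiΔ hαPi)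
    by_contra hnp
    have hneg : -(w α) ∈ pos := hmemneg _ hwΔ hnp
    obtain ⟨c, hc⟩ := hcomb _ hneg
    obtain ⟨d, -, hd⟩ := Submodule.mem_span_finset.mp (hspanDiff M hMPi α)
    have hsum0 : ∑ β ∈ Pi,
        ((c β : ℝ) + (if β ∈ M then d β else 0) + (if β = α then (1:ℝ) else 0)) • β = 0 := by
      have e1 : ∑ β ∈ Pi,
          ((c β : ℝ) + (if β ∈ M then d β else 0) + (if β = α then (1:ℝ) else 0)) • β
          = ((∑ β ∈ Pi, (c β : ℝ) • β) + (∑ β ∈ Pi, (if β ∈ M then d β else 0) • β))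
            + ∑ β ∈ Pi, (if β = α then (1:ℝ) else 0) • β := by
        rw [← Finset.sum_add_distrib, ← Finset.sum_add_distrib]
        exact Finset.sum_congr rfl fun β _ => by rw [add_smul, add_smul]
      have e2 : ∑ β ∈ Pi, (if β ∈ M then d β else 0) • β = ∑ β ∈ M, d β • β := by
        simp only [ite_smul, zero_smul]
        rw [Finset.sum_ite_mem, Finset.inter_eq_right.mpr hMPi]
      have e3 : ∑ β ∈ Pi, (if β = α then (1:ℝ) else 0) • β = α := by
        simp only [ite_smul, zero_smul]
        rw [Finset.sum_ite_eq' Pi α (fun δ => (1:ℝ) • δ), if_pos hαPi, one_smul]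
      rw [e1, e2, e3, ← hc, hd]
      abel
    have hkey := hli _ hsum0 α hαPi
    rw [if_pos rfl, if_neg hαM] at hkey
    have hnn : (0:ℝ) ≤ (c α : ℝ) := Nat.cast_nonneg _
    linarith
  have hnegW : ∀ M, M ⊆ Pi → ∀ α ∈ M, (w0M M : V ≃ₗᵢ[ℝ] V) α ∉ pos := by
    intro M hMPi α hαM hposα
    have h := hw0Mneg M hMPi α (hPiΔ (hMPi hαM)) (Submodule.subset_span hαM)
      (hPipos (hMPi hαM))
    exact ((hpart _ (hw0MΔ M hMPi α (hPiΔ (hMPi hαM)))).mp hposα) h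
  -- computation of the sets r₀ and r₂
  have hrW0 : ∀ w : V ≃ₗᵢ[ℝ] V, rW Δ pos χ 0 w = ∅ := by
    intro w
    ext α
    simp only [rW, Set.mem_setOf_eq, Set.mem_empty_iff_false, iff_false]
    rintro ⟨hΔ', h0, -⟩
    exact hchine α hΔ' (by exact_mod_cast h0)
  have hrW2 : ∀ M, M ⊆ Pi →
      rW Δ pos χ 2 (w0M M : V ≃ₗᵢ[ℝ] V) = ((Pi \ M : Finset V) : Set V) := by
    intro M hMPi
    ext α
    simp only [rW, Set.mem_setOf_eq, Finset.coe_sdiff, Set.mem_diff, Finset.mem_coe]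
    constructor
    · rintro ⟨hΔ', h2, hp⟩
      have hPi' : α ∈ Pi := (heq2 α hΔ').mp (by exact_mod_cast h2)
      exact ⟨hPi', fun hM => hnegW M hMPi α hM hp⟩
    · rintro ⟨hPi', hM⟩
      exact ⟨hPiΔ hPi', by exact_mod_cast (heq2 α (hPiΔ hPi')).mpr hPi',
        hposW M hMPi α hPi' hM⟩
  -- the value of τ
  have htau : ∀ M₁, M₁ ⊆ Pi → ∀ M₂, M₂ ⊆ Pi →
      tau Δ pos χ (w0M M₁ : V ≃ₗᵢ[ℝ] V) (w0M M₂ : V ≃ₗᵢ[ℝ] V)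
        = ((symmDiff M₁ M₂).card : ℤ) := by
    intro M₁ h₁ M₂ h₂
    rw [tau, hrW0, hrW0, hrW2 M₁ h₁, hrW2 M₂ h₂]
    have hsd : symmDiff (((Pi \ M₁ : Finset V) : Set V)) (((Pi \ M₂ : Finset V) : Set V))
        = ((symmDiff M₁ M₂ : Finset V) : Set V) := by
      rw [← Finset.coe_symmDiff]
      norm_cast
      ext b
      have hb1 : b ∈ M₁ → b ∈ Pi := fun h => h₁ h
      have hb2 : b ∈ M₂ → b ∈ Pi := fun h => h₂ h
      simp only [Finset.mem_symmDiff, Finset.mem_sdiff]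
      tauto
    rw [hsd, symmDiff_self, Set.bot_eq_empty, Set.ncard_coe_finset, Set.ncard_empty]
    simp
  intro M' hM'
  have expand : Bform Δ pos χ W (xiElt W w0M M') (xiElt W w0M M')
      = ∑ M₁ ∈ M'.powerset, ∑ M₂ ∈ M'.powerset,
          (RatFunc.X : RatFunc ℚ) ^ (M'.card - M₁.card)
            * (RatFunc.X : RatFunc ℚ) ^ (M'.card - M₂.card)
            * (-(RatFunc.X : RatFunc ℚ)) ^ (symmDiff M₁ M₂).card := by
    simp only [Bform, xiElt, map_sum, Finsupp.linearCombination_single, LinearMap.coe_sum,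
      Finset.sum_apply, LinearMap.smul_apply, smul_eq_mul, Finset.mul_sum]
    refine Finset.sum_congr rfl fun M₁ h₁ => Finset.sum_congr rfl fun M₂ h₂ => ?_
    rw [htau M₂ ((Finset.mem_powerset.mp h₂).trans hM') M₁
      ((Finset.mem_powerset.mp h₁).trans hM'), zpow_natCast, symmDiff_comm M₂ M₁]
    ring
  have key : Bform Δ pos χ W (xiElt W w0M M') (xiElt W w0M M')
      = (1 - (RatFunc.X : RatFunc ℚ) ^ 2) ^ M'.card := by
    rw [expand]; exact double_sum_eq _ _
  constructor
  · rw [key, sum_pow_card_compl, sum_pow_card]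
    ring
  · rw [key, sum_pow_card]
    ring



end
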